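/- If the sequences of polynomials C_n and D_n satisfy C_{n+1}(x) = -C_n(x) + 2(x-β_n)D_n(x) and γ_{n+1}D_{n+1}(x) = -Φ(x) + γ_n D_{n-1}(x) - (x-β_n)C_n(x) + (x-β_n)²D_n(x) for all n ≥ 0 (with D_{-1} = B, γ_0 arbitrary interpreted so the n=0 case reads γ_1 D_1 = -Φ + (x-β_0)²D_0 - (x-β_0)C_0), then for all n ≥ 0: γ_{n+1} D_n(x) D_{n+1}(x) - (1/4)(C_{n+1}(x)² - C_0(x)²) = -Φ(x) · Σ_{ν=0}^{n} D_ν(x). -/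

import Mathlib

open Polynomial

/-- Laguerre–Hahn structure-relation recurrences imply the summation identity
`γ_{n+1} D_n D_{n+1} - (1/4)(C_{n+1}² - C_0²) = -Φ · Σ_{ν=0}^{n} D_ν`. -/
theorem laguerre_hahn_sum_identity
    (Φ : Polynomial ℂ) (β γ : ℕ → ℂ) (Cc Dd : ℕ → Polynomial ℂ)
    (hγ : ∀ n, γ (n + 1) ≠ 0)
    (hSR1 : ∀ n, Cc (n + 1) = -Cc n + 2 * (X - C (β n)) * Dd n)
    (hbase : C (γ 1) * Dd 1 =
      -Φ + (X - C (β 0)) ^ 2 * Dd 0 - (X - C (β 0)) * Cc 0)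
    (hSR2 : ∀ n, 1 ≤ n → C (γ (n + 1)) * Dd (n + 1) =
      -Φ + C (γ n) * Dd (n - 1) - (X - C (β n)) * Cc n
        + (X - C (β n)) ^ 2 * Dd n) :
    ∀ n, C (γ (n + 1)) * (Dd n * Dd (n + 1))
        - C (1 / 4 : ℂ) * ((Cc (n + 1)) ^ 2 - (Cc 0) ^ 2)
      = -Φ * ∑ ν ∈ Finset.range (n + 1), Dd ν := by
  have hq : (4 : Polynomial ℂ) * C (1 / 4 : ℂ) = 1 := by
    rw [← map_ofNat (C : ℂ →+* ℂ[X]) 4, ← C_mul, ← C_1]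
    norm_num
  intro n
  induction n with
  | zero =>
    rw [hSR1 0, Finset.sum_range_one]
    linear_combination Dd 0 * hbase +
      ((X - C (β 0)) * Cc 0 * Dd 0 - (X - C (β 0)) ^ 2 * Dd 0 ^ 2) * hq
  | succ n ih =>
    have h2 := hSR2 (n + 1) (by omega)
    simp only [Nat.add_sub_cancel] at h2
    rw [hSR1 (n + 1), Finset.sum_range_succ]
    linear_combination Dd (n + 1) * h2 + ih +
      ((X - C (β (n + 1))) * Cc (n + 1) * Dd (n + 1)
        - (X - C (β (n + 1))) ^ 2 * Dd (n + 1) ^ 2) * hq
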